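/- Under the change of variables x₁=ln x, y₁=ln y and time rescaling dτ=dt/(ax²+bx+1), the system x'=x(K-x)(x-A)-p(x)y, y'=y(p(x)-d) on the open positive quadrant transforms to dx₁/dτ=G(e^{x₁})-e^{y₁}, dy₁/dτ=-(a d e^{2x₁}+(bd-1)e^{x₁}+d), whose divergence is e^{x₁}G'(e^{x₁}). -/

import Mathlib

/-- Under `x₁ = ln x`, `y₁ = ln y` and time rescaling `dτ = dt/(a x² + b x + 1)`, the
system `x' = x(K-x)(x-A) - p x · y`, `y' = y(p x - d)` transforms to
`dx₁/dτ = G(e^{x₁}) - e^{y₁}`, `dy₁/dτ = -(a d e^{2x₁} + (b d - 1)e^{x₁} + d)`,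
whose divergence is `e^{x₁} G'(e^{x₁})`. -/
theorem stmt_15 (a b K A d : ℝ) (ha : 0 < a) (hb : -2 * Real.sqrt a < b)
    (hK : 0 < K) (hA1 : -K < A) (hA2 : A < K) (hd : 0 < d)
    (p G : ℝ → ℝ)
    (hp : ∀ x, p x = x / (a * x ^ 2 + b * x + 1))
    (hG : ∀ x, G x = (x - A) * (K - x) * (a * x ^ 2 + b * x + 1)) :
    (∀ x > 0, ∀ y > 0,
      (a * x ^ 2 + b * x + 1) / x * (x * (K - x) * (x - A) - p x * y) =
        G (Real.exp (Real.log x)) - Real.exp (Real.log y) ∧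
      (a * x ^ 2 + b * x + 1) / y * (y * (p x - d)) =
        -(a * d * Real.exp (Real.log x) ^ 2 + (b * d - 1) * Real.exp (Real.log x) + d)) ∧
    (∀ x₁ y₁ : ℝ,
      deriv (fun u => G (Real.exp u) - Real.exp y₁) x₁ +
        deriv (fun v => -(a * d * Real.exp x₁ ^ 2 + (b * d - 1) * Real.exp x₁ + d) + 0 * v) y₁ =
      Real.exp x₁ * deriv G (Real.exp x₁)) := by
  have hGP : ∀ t : ℝ, HasDerivAt G
      ((1 * (K - t) + (t - A) * (-1)) * (a * t ^ 2 + b * t + 1) +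
        (t - A) * (K - t) * (a * (2 * t ^ 1) + b * 1)) t := by
    intro t
    have hGfun : G = fun x => (x - A) * (K - x) * (a * x ^ 2 + b * x + 1) := funext hG
    rw [hGfun]
    have h1 : HasDerivAt (fun x : ℝ => x - A) 1 t := (hasDerivAt_id t).sub_const A
    have h2 : HasDerivAt (fun x : ℝ => K - x) (-1) t := by
      simpa using (hasDerivAt_id t).const_sub K
    have h3 : HasDerivAt (fun x : ℝ => a * x ^ 2 + b * x + 1)
        (a * (2 * t ^ 1) + b * 1) t := by
      exact (((hasDerivAt_pow 2 t).const_mul a).add ((hasDerivAt_id t).const_mul b)).add_const 1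
    exact (h1.mul h2).mul h3
  constructor
  · intro x hx y hy
    have hq : 0 < a * x ^ 2 + b * x + 1 := by
      have h1 : (Real.sqrt a * x - 1) ^ 2 ≥ 0 := sq_nonneg _
      have hsq : Real.sqrt a ^ 2 = a := Real.sq_sqrt ha.le
      nlinarith [sq_nonneg (Real.sqrt a * x - 1), Real.sq_sqrt ha.le,
        mul_pos hx (show (0:ℝ) < b + 2 * Real.sqrt a by linarith)]
    have hxlog : Real.exp (Real.log x) = x := Real.exp_log hx
    have hylog : Real.exp (Real.log y) = y := Real.exp_log hy
    rw [hxlog, hylog, hG, hp]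
    constructor
    · field_simp [show x * (a * x + b) + 1 ≠ 0 by nlinarith]
    · field_simp [show x * (a * x + b) + 1 ≠ 0 by nlinarith]
      ring
  · intro x₁ y₁
    have hcomp : HasDerivAt (fun u : ℝ => G (Real.exp u) - Real.exp y₁)
        (((1 * (K - Real.exp x₁) + (Real.exp x₁ - A) * (-1)) *
            (a * Real.exp x₁ ^ 2 + b * Real.exp x₁ + 1) +
          (Real.exp x₁ - A) * (K - Real.exp x₁) *
            (a * (2 * Real.exp x₁ ^ 1) + b * 1)) * Real.exp x₁) x₁ :=
      (hGP (Real.exp x₁)).comp x₁ (Real.hasDerivAt_exp x₁) |>.sub_const _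
    rw [hcomp.deriv, (hGP (Real.exp x₁)).deriv]
    have : deriv (fun v : ℝ =>
        -(a * d * Real.exp x₁ ^ 2 + (b * d - 1) * Real.exp x₁ + d) + 0 * v) y₁ = 0 := by
      simp
    rw [this]
    ring
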